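/- Let g(y) = Σ_{n≥1} (−1)^{n+1} e^{−n²y/2}(1 − e^{−n²y})/n for y > 0. Then lim_{y→0⁺} g(y)/y = 1/4. -/

import Mathlib

open Filter Topology
open Set MeasureTheory intervalIntegral
noncomputable def phi (t x : ℝ) : ℝ := Real.exp (-t * x^2)
noncomputable def phi1 (t x : ℝ) : ℝ := (-2*t*x) * Real.exp (-t * x^2)
noncomputable def phi2 (t x : ℝ) : ℝ := (4*t^2*x^2 - 2*t) * Real.exp (-t * x^2)
noncomputable def phi3 (t x : ℝ) : ℝ := (12*t^2*x - 8*t^3*x^3) * Real.exp (-t * x^2)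

lemma hasDerivAt_exp_neg_sq (t x : ℝ) : HasDerivAt (fun x : ℝ => Real.exp (-t * x^2)) ((-2*t*x) * Real.exp (-t * x^2)) x := by
  have h1 : HasDerivAt (fun x : ℝ => -t * x^2) (-2*t*x) x := by
    simpa [mul_comm, mul_assoc, mul_left_comm] using ((hasDerivAt_pow 2 x).const_mul (-t))
  simpa [mul_comm] using h1.exp

lemma hasDerivAt_phi (t x : ℝ) : HasDerivAt (phi t) (phi1 t x) x := hasDerivAt_exp_neg_sq t x

lemma hasDerivAt_phi1 (t x : ℝ) : HasDerivAt (phi1 t) (phi2 t x) x := by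
  have h1 : HasDerivAt (fun x : ℝ => -2*t*x) (-2*t) x := by
    simpa using (hasDerivAt_id x).const_mul (-2*t)
  have := h1.mul (hasDerivAt_exp_neg_sq t x)
  refine this.congr_deriv ?_
  unfold phi2; ring

lemma hasDerivAt_phi2 (t x : ℝ) : HasDerivAt (phi2 t) (phi3 t x) x := by
  have h1 : HasDerivAt (fun x : ℝ => 4*t^2*x^2 - 2*t) (8*t^2*x) x := by
    have := ((hasDerivAt_pow 2 x).const_mul (4*t^2)).sub_const (2*t)
    exact this.congr_deriv (by norm_num; ring)
  have := h1.mul (hasDerivAt_exp_neg_sq t x)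
  refine this.congr_deriv ?_
  unfold phi3; ring

/-- generic: |f b - f a| ≤ C*(b-a) when |f'| ≤ C on [a,b] -/
lemma abs_sub_le_of_deriv_le {f f' : ℝ → ℝ} {a b C : ℝ} (hab : a ≤ b)
    (hd : ∀ x ∈ Icc a b, HasDerivAt f (f' x) x)
    (hb : ∀ x ∈ Icc a b, |f' x| ≤ C) : |f b - f a| ≤ C * (b - a) := by
  have := (convex_Icc a b).norm_image_sub_le_of_norm_hasDerivWithin_le
    (f := f) (f' := f') (fun x hx => (hd x hx).hasDerivWithinAt)
    (fun x hx => hb x hx) (left_mem_Icc.2 hab) (right_mem_Icc.2 hab)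
  simpa [Real.norm_eq_abs, abs_of_nonneg (sub_nonneg.2 hab)] using this

lemma exp_anti {t a x : ℝ} (ht : 0 ≤ t) (ha : 0 ≤ a) (h : a ≤ x) :
    Real.exp (-t * x^2) ≤ Real.exp (-t * a^2) := by
  apply Real.exp_le_exp.2
  have h2 : a^2 ≤ x^2 := pow_le_pow_left₀ ha h 2
  nlinarith

lemma phi2_abs_le {t r x : ℝ} (ht : 0 < t) (hr : 1 ≤ r) (h1 : r ≤ x) (h2 : x ≤ r + 2) :
    |phi2 t x| ≤ (36*t^2*r^2 + 2*t) * Real.exp (-t * r^2) := by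
  unfold phi2
  have hx3 : x ≤ 3*r := by linarith
  have hx0 : (0:ℝ) ≤ x := by linarith
  have he : Real.exp (-t * x^2) ≤ Real.exp (-t * r^2) :=
    exp_anti ht.le (by linarith) h1
  have hep : (0:ℝ) < Real.exp (-t * x^2) := Real.exp_pos _
  have habs : |4*t^2*x^2 - 2*t| ≤ 36*t^2*r^2 + 2*t := by
    have h2 : x^2 ≤ (3*r)^2 := pow_le_pow_left₀ hx0 hx3 2
    have h3 : t^2 * x^2 ≤ t^2 * ((3*r)^2) := mul_le_mul_of_nonneg_left h2 (sq_nonneg t)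
    have h4 : (0:ℝ) ≤ t^2 * x^2 := by positivity
    have h5 : (0:ℝ) ≤ t^2 * r^2 := by positivity
    rw [abs_sub_le_iff]
    constructor <;> nlinarith
  calc |(4*t^2*x^2 - 2*t) * Real.exp (-t * x^2)|
      = |4*t^2*x^2 - 2*t| * Real.exp (-t * x^2) := by
        rw [abs_mul, abs_of_pos hep]
    _ ≤ (36*t^2*r^2 + 2*t) * Real.exp (-t * r^2) := by
        apply mul_le_mul habs he hep.le
        positivity

lemma phi3_abs_le {t r x : ℝ} (ht : 0 < t) (hr : 1 ≤ r) (h1 : r ≤ x) (h2 : x ≤ r + 3) :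
    |phi3 t x| ≤ (48*t^2*r + 512*t^3*r^3) * Real.exp (-t * r^2) := by
  unfold phi3
  have hx4 : x ≤ 4*r := by linarith
  have hx0 : (0:ℝ) ≤ x := by linarith
  have he : Real.exp (-t * x^2) ≤ Real.exp (-t * r^2) :=
    exp_anti ht.le (by linarith) h1
  have hep : (0:ℝ) < Real.exp (-t * x^2) := Real.exp_pos _
  have habs : |12*t^2*x - 8*t^3*x^3| ≤ 48*t^2*r + 512*t^3*r^3 := by
    have h2 : x^3 ≤ (4*r)^3 := pow_le_pow_left₀ hx0 hx4 3
    have h3 : t^3 * x^3 ≤ t^3 * ((4*r)^3) := mul_le_mul_of_nonneg_left h2 (by positivity)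
    have h4 : (0:ℝ) ≤ t^3 * x^3 := by positivity
    have h5 : (0:ℝ) ≤ t^3 * r^3 := by positivity
    have h6 : t^2 * x ≤ t^2 * (4*r) := mul_le_mul_of_nonneg_left hx4 (sq_nonneg t)
    have h7 : (0:ℝ) ≤ t^2 * x := by positivity
    have h8 : (0:ℝ) ≤ t^2 * r := by positivity
    rw [abs_sub_le_iff]
    constructor <;> nlinarith
  calc |(12*t^2*x - 8*t^3*x^3) * Real.exp (-t * x^2)|
      = |12*t^2*x - 8*t^3*x^3| * Real.exp (-t * x^2) := by
        rw [abs_mul, abs_of_pos hep]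
    _ ≤ (48*t^2*r + 512*t^3*r^3) * Real.exp (-t * r^2) := by
        apply mul_le_mul habs he hep.le
        positivity

lemma D2r {t r : ℝ} (ht : 0 < t) (hr : 1 ≤ r) :
    |phi t r - 2*phi t (r+1) + phi t (r+2)| ≤ (36*t^2*r^2 + 2*t) * Real.exp (-t * r^2) := by
  set C := (36*t^2*r^2 + 2*t) * Real.exp (-t * r^2) with hC
  set ψ : ℝ → ℝ := fun x => phi t (x+1) - phi t x with hψ
  have hdψ : ∀ x, HasDerivAt ψ (phi1 t (x+1) - phi1 t x) x := by
    intro x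
    have h1 : HasDerivAt (fun x : ℝ => phi t (x+1)) (phi1 t (x+1)) x := by
      exact (hasDerivAt_phi t (x+1)).comp_add_const x 1
    exact h1.sub (hasDerivAt_phi t x)
  have key : |ψ (r+1) - ψ r| ≤ C * ((r+1) - r) := by
    apply abs_sub_le_of_deriv_le (by linarith) (fun x _ => hdψ x)
    intro x hx
    have : |phi1 t (x+1) - phi1 t x| ≤ C * ((x+1) - x) := by
      apply abs_sub_le_of_deriv_le (by linarith) (fun y _ => hasDerivAt_phi1 t y)
      intro y hy
      apply phi2_abs_le ht hr
      · exact le_trans hx.1 hy.1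
      · have := hy.2; have := hx.2; simp at this ⊢; linarith
    simpa using this
  have : ψ (r+1) - ψ r = phi t r - 2*phi t (r+1) + phi t (r+2) := by
    simp only [hψ]
    have : r + 1 + 1 = r + 2 := by ring
    rw [this]; ring
  rw [this] at key
  simpa using key

lemma D3r {t r : ℝ} (ht : 0 < t) (hr : 1 ≤ r) :
    |(phi t (r+1) - 2*phi t (r+2) + phi t (r+3)) - (phi t r - 2*phi t (r+1) + phi t (r+2))|
      ≤ (48*t^2*r + 512*t^3*r^3) * Real.exp (-t * r^2) := by
  set C := (48*t^2*r + 512*t^3*r^3) * Real.exp (-t * r^2) with hC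
  set ω : ℝ → ℝ := fun y => phi1 t (y+1) - phi1 t y with hω
  have hdω : ∀ y, HasDerivAt ω (phi2 t (y+1) - phi2 t y) y := by
    intro y
    have h1 : HasDerivAt (fun y : ℝ => phi1 t (y+1)) (phi2 t (y+1)) y := by
      exact (hasDerivAt_phi1 t (y+1)).comp_add_const y 1
    exact h1.sub (hasDerivAt_phi1 t y)
  set χ : ℝ → ℝ := fun x => phi t (x+2) - 2*phi t (x+1) + phi t x with hχ
  have hdχ : ∀ x, HasDerivAt χ (ω (x+1) - ω x) x := by
    intro x
    have h2 : HasDerivAt (fun x : ℝ => phi t (x+2)) (phi1 t (x+2)) x := by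
      exact (hasDerivAt_phi t (x+2)).comp_add_const x 2
    have h1 : HasDerivAt (fun x : ℝ => 2 * phi t (x+1)) (2 * phi1 t (x+1)) x := by
      have : HasDerivAt (fun x : ℝ => phi t (x+1)) (phi1 t (x+1)) x := by
        exact (hasDerivAt_phi t (x+1)).comp_add_const x 1
      exact this.const_mul 2
    have := (h2.sub h1).add (hasDerivAt_phi t x)
    refine this.congr_deriv ?_
    simp only [hω]
    have e1 : x + 1 + 1 = x + 2 := by ring
    rw [e1]; ring
  have key : |χ (r+1) - χ r| ≤ C * ((r+1) - r) := by
    apply abs_sub_le_of_deriv_le (by linarith) (fun x _ => hdχ x)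
    intro x hx
    have : |ω (x+1) - ω x| ≤ C * ((x+1) - x) := by
      apply abs_sub_le_of_deriv_le (by linarith) (fun y _ => hdω y)
      intro y hy
      have : |phi2 t (y+1) - phi2 t y| ≤ C * ((y+1) - y) := by
        apply abs_sub_le_of_deriv_le (by linarith) (fun z _ => hasDerivAt_phi2 t z)
        intro z hz
        apply phi3_abs_le ht hr
        · exact le_trans hx.1 (le_trans hy.1 hz.1)
        · have := hz.2; have := hy.2; have := hx.2; simp at this ⊢; linarith
      simpa using this
    simpa using this
  have : χ (r+1) - χ r =
      (phi t (r+1) - 2*phi t (r+2) + phi t (r+3)) - (phi t r - 2*phi t (r+1) + phi t (r+2)) := by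
    simp only [hχ]
    have e1 : r + 1 + 2 = r + 3 := by ring
    have e2 : r + 1 + 1 = r + 2 := by ring
    rw [e1, e2]; ring
  rw [this] at key
  simpa using key

lemma gauss_cont {t : ℝ} : Continuous (fun x : ℝ => Real.exp (-t * x^2)) := by
  continuity

lemma summable_pow_E {t : ℝ} (ht : 0 < t) (j : ℕ) :
    Summable (fun n : ℕ => ((n:ℝ)+1)^j * Real.exp (-t * ((n:ℝ)+1)^2)) := by
  have hr : |Real.exp (-t)| < 1 := by
    rw [abs_of_pos (Real.exp_pos _)]
    exact Real.exp_lt_one_iff.2 (by linarith)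
  have hs : Summable (fun n : ℕ => (n:ℝ)^j * Real.exp (-t) ^ n) :=
    summable_pow_mul_geometric_of_norm_lt_one j hr
  have hs2 := hs.comp_injective (add_left_injective 1)
  apply Summable.of_nonneg_of_le (fun n => by positivity) _ hs2
  intro n
  simp only [Function.comp]
  push_cast
  have h1 : Real.exp (-t * ((n:ℝ)+1)^2) ≤ Real.exp (-t) ^ (n+1) := by
    rw [← Real.exp_nat_mul]
    apply Real.exp_le_exp.2
    have h0 : (0:ℝ) ≤ (n:ℝ) := Nat.cast_nonneg n
    have h2 : ((n:ℝ)+1) ≤ ((n:ℝ)+1)^2 := by nlinarith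
    push_cast
    nlinarith [mul_le_mul_of_nonneg_left h2 ht.le]
  apply mul_le_mul_of_nonneg_left h1 (by positivity)

lemma tsum_E_le {t : ℝ} (ht : 0 < t) :
    ∑' n : ℕ, Real.exp (-t * ((n:ℝ)+1)^2) ≤ 1 / Real.sqrt t := by
  have hsum := summable_pow_E ht 0
  simp only [pow_zero, one_mul] at hsum
  apply Summable.tsum_le_of_sum_range_le hsum
  intro M
  have hint : ∀ k : ℕ, IntervalIntegrable (fun x : ℝ => Real.exp (-t * x^2)) volume (k:ℝ) ((k:ℝ)+1) :=
    fun k => (gauss_cont).intervalIntegrable _ _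
  have step : ∀ n : ℕ, Real.exp (-t * ((n:ℝ)+1)^2) ≤ ∫ x in (n:ℝ)..((n:ℝ)+1), Real.exp (-t * x^2) := by
    intro n
    have hconst : Real.exp (-t * ((n:ℝ)+1)^2)
        = ∫ _x in (n:ℝ)..((n:ℝ)+1), Real.exp (-t * ((n:ℝ)+1)^2) := by
      simp
    rw [hconst]
    apply intervalIntegral.integral_mono_on (by linarith)
      (intervalIntegrable_const) (hint n)
    intro x hx
    apply Real.exp_le_exp.2
    have h1 : x ≤ (n:ℝ)+1 := hx.2
    have h0 : (0:ℝ) ≤ x := le_trans (Nat.cast_nonneg n) hx.1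
    have h2 : x^2 ≤ ((n:ℝ)+1)^2 := pow_le_pow_left₀ h0 h1 2
    nlinarith
  calc ∑ n ∈ Finset.range M, Real.exp (-t * ((n:ℝ)+1)^2)
      ≤ ∑ n ∈ Finset.range M, ∫ x in (n:ℝ)..((n:ℝ)+1), Real.exp (-t * x^2) :=
        Finset.sum_le_sum (fun n _ => step n)
    _ = ∫ x in (0:ℝ)..(M:ℝ), Real.exp (-t * x^2) := by
        have := intervalIntegral.sum_integral_adjacent_intervals
          (a := fun k : ℕ => (k:ℝ)) (f := fun x => Real.exp (-t * x^2)) (μ := volume)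
          (n := M) (fun k _ => by push_cast; exact hint k)
        push_cast at this ⊢
        rw [← this]
    _ ≤ ∫ x in Ioi (0:ℝ), Real.exp (-t * x^2) := by
        rw [intervalIntegral.integral_of_le (by positivity)]
        apply setIntegral_mono_set
        · exact (integrable_exp_neg_mul_sq ht).integrableOn
        · filter_upwards with x using (Real.exp_pos _).le
        · filter_upwards with x hx using hx.1
    _ ≤ 1 / Real.sqrt t := by
        have : ∫ x in Ioi (0:ℝ), Real.exp (-t * x^2) = Real.sqrt (Real.pi / t) / 2 := by
          simpa [neg_mul] using integral_gaussian_Ioi t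
        rw [this, Real.sqrt_div Real.pi_pos.le]
        have hst : 0 < Real.sqrt t := Real.sqrt_pos.2 ht
        have h4 : Real.sqrt Real.pi ≤ 2 := by
          have := Real.sqrt_le_sqrt (show Real.pi ≤ 4 by linarith [Real.pi_le_four])
          rwa [show (4:ℝ) = 2^2 by norm_num, Real.sqrt_sq (by norm_num : (0:ℝ) ≤ 2)] at this
        rw [div_div, div_le_div_iff₀ (by positivity) hst]
        nlinarith

lemma ve {v : ℝ} (hv : 0 ≤ v) : v * Real.exp (-v) ≤ 1 := by
  have h1 : v ≤ Real.exp v := by linarith [Real.add_one_le_exp v]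
  have h2 : 0 < (Real.exp v)⁻¹ := inv_pos.2 (Real.exp_pos v)
  have h3 : Real.exp v * (Real.exp v)⁻¹ = 1 := mul_inv_cancel₀ (Real.exp_pos v).ne'
  rw [Real.exp_neg]
  nlinarith [mul_le_mul_of_nonneg_right h1 h2.le]

lemma v2e {v : ℝ} (hv : 0 ≤ v) : v^2 * Real.exp (-v) ≤ 4 := by
  have w := ve (show (0:ℝ) ≤ v/2 by linarith)
  have hsplit : Real.exp (-v) = Real.exp (-(v/2)) * Real.exp (-(v/2)) := by
    rw [← Real.exp_add]; ring_nf
  rw [hsplit]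
  nlinarith [mul_nonneg hv (Real.exp_pos (-(v/2))).le, Real.exp_pos (-(v/2))]

lemma sqrt_t2 {t : ℝ} (ht : 0 < t) : 1 / Real.sqrt (t/2) ≤ 1.5 / Real.sqrt t := by
  rw [Real.sqrt_div ht.le 2]
  have hst : 0 < Real.sqrt t := Real.sqrt_pos.2 ht
  have h2 : Real.sqrt 2 ≤ 1.5 := by
    have := Real.sqrt_le_sqrt (show (2:ℝ) ≤ 1.5^2 by norm_num)
    rwa [Real.sqrt_sq (by norm_num : (0:ℝ) ≤ 1.5)] at this
  have h2p : 0 < Real.sqrt 2 := by positivity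
  rw [div_div_eq_mul_div, one_mul, div_le_div_iff₀ hst hst]
  nlinarith

lemma pointwise2 {t : ℝ} (ht : 0 < t) (n : ℕ) :
    ((n:ℝ)+1)^2 * Real.exp (-t * ((n:ℝ)+1)^2)
      ≤ (2/t) * Real.exp (-(t/2) * ((n:ℝ)+1)^2) := by
  set X := ((n:ℝ)+1)^2 with hX
  have hX0 : 0 ≤ X := by positivity
  have hv := ve (show (0:ℝ) ≤ (t/2)*X by positivity)
  have hsplit : Real.exp (-t * X) = Real.exp (-((t/2)*X)) * Real.exp (-(t/2) * X) := by
    rw [← Real.exp_add]; ring_nf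
  rw [hsplit, ← mul_assoc]
  apply mul_le_mul_of_nonneg_right _ (Real.exp_pos _).le
  have h1 : X * Real.exp (-((t/2)*X)) = (2/t) * (((t/2)*X) * Real.exp (-((t/2)*X))) := by
    field_simp
  rw [h1]
  have := mul_le_mul_of_nonneg_left hv (show (0:ℝ) ≤ 2/t by positivity)
  simpa using this

lemma pointwise4 {t : ℝ} (ht : 0 < t) (n : ℕ) :
    ((n:ℝ)+1)^4 * Real.exp (-t * ((n:ℝ)+1)^2)
      ≤ (16/t^2) * Real.exp (-(t/2) * ((n:ℝ)+1)^2) := by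
  set X := ((n:ℝ)+1)^2 with hX
  have hX0 : 0 ≤ X := by positivity
  have hv := v2e (show (0:ℝ) ≤ (t/2)*X by positivity)
  have hsplit : Real.exp (-t * X) = Real.exp (-((t/2)*X)) * Real.exp (-(t/2) * X) := by
    rw [← Real.exp_add]; ring_nf
  have h4 : ((n:ℝ)+1)^4 = X^2 := by rw [hX]; ring
  rw [h4, hsplit, ← mul_assoc]
  apply mul_le_mul_of_nonneg_right _ (Real.exp_pos _).le
  have h1 : X^2 * Real.exp (-((t/2)*X)) = (4/t^2) * (((t/2)*X)^2 * Real.exp (-((t/2)*X))) := by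
    field_simp; ring
  rw [h1]
  have := mul_le_mul_of_nonneg_left hv (show (0:ℝ) ≤ 4/t^2 by positivity)
  calc (4/t^2) * (((t/2)*X)^2 * Real.exp (-((t/2)*X))) ≤ (4/t^2) * 4 := this
    _ = 16/t^2 := by ring

lemma tsum_sq_E_le {t : ℝ} (ht : 0 < t) :
    ∑' n : ℕ, ((n:ℝ)+1)^2 * Real.exp (-t * ((n:ℝ)+1)^2) ≤ 3 / (t * Real.sqrt t) := by
  have ht2 : 0 < t/2 := by linarith
  have h1 : ∑' n : ℕ, ((n:ℝ)+1)^2 * Real.exp (-t * ((n:ℝ)+1)^2)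
      ≤ ∑' n : ℕ, (2/t) * Real.exp (-(t/2) * ((n:ℝ)+1)^2) := by
    apply Summable.tsum_le_tsum (fun n => pointwise2 ht n) (summable_pow_E ht 2)
    simpa using (summable_pow_E ht2 0).mul_left (2/t)
  have h2 : ∑' n : ℕ, (2/t) * Real.exp (-(t/2) * ((n:ℝ)+1)^2)
      = (2/t) * ∑' n : ℕ, Real.exp (-(t/2) * ((n:ℝ)+1)^2) := tsum_mul_left
  have h3 := tsum_E_le ht2
  have h4 := sqrt_t2 ht
  have hst : 0 < Real.sqrt t := Real.sqrt_pos.2 ht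
  calc ∑' n : ℕ, ((n:ℝ)+1)^2 * Real.exp (-t * ((n:ℝ)+1)^2)
      ≤ (2/t) * ∑' n : ℕ, Real.exp (-(t/2) * ((n:ℝ)+1)^2) := by rw [← h2]; exact h1
    _ ≤ (2/t) * (1.5 / Real.sqrt t) := by
        apply mul_le_mul_of_nonneg_left _ (by positivity)
        exact le_trans h3 h4
    _ = 3 / (t * Real.sqrt t) := by field_simp; ring
  
lemma tsum_four_E_le {t : ℝ} (ht : 0 < t) :
    ∑' n : ℕ, ((n:ℝ)+1)^4 * Real.exp (-t * ((n:ℝ)+1)^2) ≤ 24 / (t^2 * Real.sqrt t) := by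
  have ht2 : 0 < t/2 := by linarith
  have h1 : ∑' n : ℕ, ((n:ℝ)+1)^4 * Real.exp (-t * ((n:ℝ)+1)^2)
      ≤ ∑' n : ℕ, (16/t^2) * Real.exp (-(t/2) * ((n:ℝ)+1)^2) := by
    apply Summable.tsum_le_tsum (fun n => pointwise4 ht n) (summable_pow_E ht 4)
    simpa using (summable_pow_E ht2 0).mul_left (16/t^2)
  have h2 : ∑' n : ℕ, (16/t^2) * Real.exp (-(t/2) * ((n:ℝ)+1)^2)
      = (16/t^2) * ∑' n : ℕ, Real.exp (-(t/2) * ((n:ℝ)+1)^2) := tsum_mul_left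
  have h3 := tsum_E_le ht2
  have h4 := sqrt_t2 ht
  have hst : 0 < Real.sqrt t := Real.sqrt_pos.2 ht
  calc ∑' n : ℕ, ((n:ℝ)+1)^4 * Real.exp (-t * ((n:ℝ)+1)^2)
      ≤ (16/t^2) * ∑' n : ℕ, Real.exp (-(t/2) * ((n:ℝ)+1)^2) := by rw [← h2]; exact h1
    _ ≤ (16/t^2) * (1.5 / Real.sqrt t) := by
        apply mul_le_mul_of_nonneg_left _ (by positivity)
        exact le_trans h3 h4
    _ = 24 / (t^2 * Real.sqrt t) := by field_simp; ring

noncomputable def E (t : ℝ) (k : ℕ) : ℝ := Real.exp (-t * (k:ℝ)^2)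
noncomputable def D2 (t : ℝ) (k : ℕ) : ℝ := E t k - 2*E t (k+1) + E t (k+2)

lemma Id1 (t : ℝ) (M : ℕ) :
    ∑ m ∈ Finset.range M, ((m:ℝ)+1) * D2 t (2*m+1)
      = (∑ n ∈ Finset.range (2*M), (-1:ℝ)^n * ((n:ℝ)+1) * E t (n+1)) + M * E t (2*M+1) := by
  induction M with
  | zero => simp
  | succ M ih =>
    have e1 : 2*(M+1) = 2*M + 1 + 1 := by ring
    rw [Finset.sum_range_succ, ih, e1, Finset.sum_range_succ, Finset.sum_range_succ]
    have s1 : (-1:ℝ)^(2*M) = 1 := by rw [pow_mul]; norm_num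
    have s2 : (-1:ℝ)^(2*M+1) = -1 := by rw [pow_succ, s1]; norm_num
    rw [s1, s2]
    unfold D2
    have h1 : 2*M+1+2 = 2*M+1+1+1 := by ring
    rw [h1]
    push_cast
    ring

lemma Id2 (t : ℝ) (M : ℕ) :
    ∑ i ∈ Finset.range M, ((i:ℝ)+2) * D2 t (i+1)
      = 2*E t 1 - E t 2 - ((M:ℝ)+2)*E t (M+1) + ((M:ℝ)+1)*E t (M+2) := by
  induction M with
  | zero => simp
  | succ M ih =>
    rw [Finset.sum_range_succ, ih]
    unfold D2
    have h1 : M+1+1 = M+2 := by ring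
    have h2 : M+1+2 = M+3 := by ring
    have h3 : M+2+1 = M+3 := by ring
    rw [h1, h2, h3]
    push_cast
    ring

noncomputable def H (t : ℝ) : ℝ := ∑' n : ℕ, (-1:ℝ)^n * ((n:ℝ)+1) * E t (n+1)

lemma E_pos {t : ℝ} (k : ℕ) : 0 < E t k := Real.exp_pos _

lemma E_succ (t : ℝ) (n : ℕ) : E t (n+1) = Real.exp (-t * ((n:ℝ)+1)^2) := by
  unfold E; push_cast; ring_nf

lemma summable_pow_E' {t : ℝ} (ht : 0 < t) (j : ℕ) :
    Summable (fun n : ℕ => ((n:ℝ)+1)^j * E t (n+1)) := by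
  apply (summable_pow_E ht j).congr
  intro n; rw [E_succ]

lemma E_anti {t : ℝ} (ht : 0 < t) {k l : ℕ} (h : k ≤ l) : E t l ≤ E t k := by
  unfold E
  apply Real.exp_le_exp.2
  have hc : (k:ℝ) ≤ (l:ℝ) := by exact_mod_cast h
  have h2 : (k:ℝ)^2 ≤ (l:ℝ)^2 := pow_le_pow_left₀ (Nat.cast_nonneg k) hc 2
  nlinarith

lemma D2_abs_le4 {t : ℝ} (ht : 0 < t) (k : ℕ) : |D2 t k| ≤ 4 * E t k := by
  unfold D2
  have h1 := E_anti ht (show k ≤ k+1 by omega)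
  have h2 := E_anti ht (show k ≤ k+2 by omega)
  have := E_pos (t := t) k; have := E_pos (t := t) (k+1); have := E_pos (t := t) (k+2)
  rw [abs_le]; constructor <;> nlinarith

/-- summable: (m+1) * D2 t (2m+1) -/
lemma summable_mD2 {t : ℝ} (ht : 0 < t) :
    Summable (fun m : ℕ => ((m:ℝ)+1) * D2 t (2*m+1)) := by
  apply Summable.of_norm
  apply Summable.of_nonneg_of_le (fun m => norm_nonneg _)
    (f := fun m : ℕ => 4 * (((m:ℝ)+1) * E t (m+1)))
  · intro m
    rw [Real.norm_eq_abs, abs_mul, abs_of_nonneg (by positivity : (0:ℝ) ≤ (m:ℝ)+1)]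
    have h1 := D2_abs_le4 ht (2*m+1)
    have h2 := E_anti ht (show m+1 ≤ 2*m+1 by omega)
    have hm : (0:ℝ) ≤ (m:ℝ)+1 := by positivity
    nlinarith [abs_nonneg (D2 t (2*m+1)), E_pos (t := t) (2*m+1)]
  · exact (summable_pow_E' ht 1).mul_left 4 |>.congr (fun n => by ring)

lemma summable_iD2 {t : ℝ} (ht : 0 < t) :
    Summable (fun i : ℕ => ((i:ℝ)+2) * D2 t (i+1)) := by
  apply Summable.of_norm
  apply Summable.of_nonneg_of_le (fun m => norm_nonneg _)
    (f := fun i : ℕ => 8 * (((i:ℝ)+1) * E t (i+1)))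
  · intro i
    rw [Real.norm_eq_abs, abs_mul, abs_of_nonneg (by positivity : (0:ℝ) ≤ (i:ℝ)+2)]
    have h1 := D2_abs_le4 ht (i+1)
    have hi : (0:ℝ) ≤ (i:ℝ) := Nat.cast_nonneg i
    nlinarith [abs_nonneg (D2 t (i+1)), E_pos (t := t) (i+1)]
  · exact (summable_pow_E' ht 1).mul_left 8 |>.congr (fun n => by ring)

lemma summable_a {t : ℝ} (ht : 0 < t) :
    Summable (fun n : ℕ => (-1:ℝ)^n * ((n:ℝ)+1) * E t (n+1)) := by
  apply Summable.of_norm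
  refine (summable_pow_E' ht 1).congr fun n => ?_
  rw [pow_one, Real.norm_eq_abs, abs_mul, abs_mul, abs_pow, abs_neg, abs_one, one_pow, one_mul,
    abs_of_nonneg (by positivity : (0:ℝ) ≤ (n:ℝ)+1), abs_of_pos (E_pos _)]

lemma tendsto_2M : Filter.Tendsto (fun M : ℕ => 2*M) Filter.atTop Filter.atTop :=
  Filter.tendsto_atTop_atTop.2 (fun b => ⟨b, fun a ha => by omega⟩)

/-- boundary terms tend to zero -/
lemma tendsto_bd {t : ℝ} (ht : 0 < t) {c : ℝ} (hc : 0 ≤ c) (hc2 : c ≤ 2) {φ : ℕ → ℕ}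
    (hφ : ∀ M, M+1 ≤ φ M) :
    Filter.Tendsto (fun M : ℕ => ((M:ℝ)+c) * E t (φ M)) Filter.atTop (𝓝 0) := by
  have hsum := (((summable_pow_E' ht 1).congr (fun n => by rw [pow_one])).mul_left 2 :
    Summable (fun M : ℕ => 2 * (((M:ℝ)+1) * E t (M+1))))
  have hterm := hsum.tendsto_atTop_zero
  apply squeeze_zero (g := fun M : ℕ => 2 * (((M:ℝ)+1) * E t (M+1)))
    (fun M => mul_nonneg (by linarith [Nat.cast_nonneg (α := ℝ) M]) (E_pos _).le) _ hterm
  intro M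
  show ((M:ℝ)+c) * E t (φ M) ≤ 2 * (((M:ℝ)+1) * E t (M+1))
  have h1 := E_anti ht (hφ M)
  have hM : (0:ℝ) ≤ (M:ℝ) := Nat.cast_nonneg M
  have := E_pos (t := t) (φ M); have := E_pos (t := t) (M+1)
  nlinarith

lemma identityA {t : ℝ} (ht : 0 < t) :
    ∑' m : ℕ, ((m:ℝ)+1) * D2 t (2*m+1) = H t := by
  have h1 : Filter.Tendsto (fun M : ℕ => ∑ m ∈ Finset.range M, ((m:ℝ)+1) * D2 t (2*m+1))
      Filter.atTop (𝓝 (∑' m : ℕ, ((m:ℝ)+1) * D2 t (2*m+1))) :=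
    (summable_mD2 ht).hasSum.tendsto_sum_nat
  have h2 : Filter.Tendsto (fun M : ℕ => ∑ m ∈ Finset.range M, ((m:ℝ)+1) * D2 t (2*m+1))
      Filter.atTop (𝓝 (H t + 0)) := by
    have ha : Filter.Tendsto (fun K : ℕ => ∑ n ∈ Finset.range K, (-1:ℝ)^n * ((n:ℝ)+1) * E t (n+1))
        Filter.atTop (𝓝 (H t)) := (summable_a ht).hasSum.tendsto_sum_nat
    have hb := ha.comp tendsto_2M
    have hc := tendsto_bd ht (le_refl 0) (by norm_num) (φ := fun M => 2*M+1)
      (fun M => by show M+1 ≤ 2*M+1; omega)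
    have := hb.add hc
    apply this.congr
    intro M
    simp only [Function.comp]
    rw [Id1 t M]
    norm_num
  simpa using tendsto_nhds_unique h1 h2

lemma identityB {t : ℝ} (ht : 0 < t) :
    ∑' i : ℕ, ((i:ℝ)+2) * D2 t (i+1) = 2*E t 1 - E t 2 := by
  have h1 : Filter.Tendsto (fun M : ℕ => ∑ i ∈ Finset.range M, ((i:ℝ)+2) * D2 t (i+1))
      Filter.atTop (𝓝 (∑' i : ℕ, ((i:ℝ)+2) * D2 t (i+1))) :=
    (summable_iD2 ht).hasSum.tendsto_sum_nat
  have hc := tendsto_bd ht (by norm_num : (0:ℝ) ≤ 2) (le_refl 2) (φ := fun M => M+1)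
    (fun M => by show M+1 ≤ M+1; omega)
  have hd := tendsto_bd ht (by norm_num : (0:ℝ) ≤ 1) (by norm_num) (φ := fun M => M+2)
    (fun M => by show M+1 ≤ M+2; omega)
  have h2 : Filter.Tendsto (fun M : ℕ => ∑ i ∈ Finset.range M, ((i:ℝ)+2) * D2 t (i+1))
      Filter.atTop (𝓝 (2*E t 1 - E t 2 - 0 + 0)) := by
    have := (((tendsto_const_nhds (α := ℕ) (f := Filter.atTop)
      (x := 2*E t 1 - E t 2)).sub hc).add hd)
    apply this.congr
    intro M
    rw [Id2 t M]
  rw [show 2*E t 1 - E t 2 - 0 + 0 = 2*E t 1 - E t 2 by ring] at h2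
  exact tendsto_nhds_unique h1 h2

lemma tsum_E_le' {t : ℝ} (ht : 0 < t) :
    ∑' n : ℕ, E t (n+1) ≤ 1 / Real.sqrt t := by
  simp only [E_succ]
  exact tsum_E_le ht

lemma tsum_sq_E_le' {t : ℝ} (ht : 0 < t) :
    ∑' n : ℕ, ((n:ℝ)+1)^2 * E t (n+1) ≤ 3 / (t * Real.sqrt t) := by
  simp only [E_succ]
  exact tsum_sq_E_le ht

lemma tsum_four_E_le' {t : ℝ} (ht : 0 < t) :
    ∑' n : ℕ, ((n:ℝ)+1)^4 * E t (n+1) ≤ 24 / (t^2 * Real.sqrt t) := by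
  simp only [E_succ]
  exact tsum_four_E_le ht

lemma E_phi (t : ℝ) (k : ℕ) (j : ℕ) : E t (k + j) = phi t ((k:ℝ) + (j:ℝ)) := by
  unfold E phi; push_cast; ring_nf

lemma D2_nat {t : ℝ} (ht : 0 < t) {k : ℕ} (hk : 1 ≤ k) :
    |D2 t k| ≤ (36*t^2*(k:ℝ)^2 + 2*t) * E t k := by
  have hr : (1:ℝ) ≤ (k:ℝ) := by exact_mod_cast hk
  have := D2r ht hr
  unfold D2
  have e0 : E t k = phi t (k:ℝ) := by simpa using E_phi t k 0
  have e1 : E t (k+1) = phi t ((k:ℝ)+1) := by simpa using E_phi t k 1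
  have e2 : E t (k+2) = phi t ((k:ℝ)+2) := by simpa using E_phi t k 2
  rw [e0, e1, e2]
  simpa [phi] using this

lemma D3_nat {t : ℝ} (ht : 0 < t) {k : ℕ} (hk : 1 ≤ k) :
    |D2 t (k+1) - D2 t k| ≤ (48*t^2*(k:ℝ) + 512*t^3*(k:ℝ)^3) * E t k := by
  have hr : (1:ℝ) ≤ (k:ℝ) := by exact_mod_cast hk
  have := D3r ht hr
  unfold D2
  have e0 : E t k = phi t (k:ℝ) := by simpa using E_phi t k 0
  have e1 : E t (k+1) = phi t ((k:ℝ)+1) := by simpa using E_phi t k 1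
  have e2 : E t (k+2) = phi t ((k:ℝ)+2) := by simpa using E_phi t k 2
  have e3 : E t (k+3) = phi t ((k:ℝ)+3) := by simpa using E_phi t k 3
  have e1' : E t (k+1+1) = E t (k+2) := by norm_num
  have e2' : E t (k+1+2) = E t (k+3) := by norm_num
  rw [e1', e2', e0, e1, e2, e3]
  simpa [phi] using this

noncomputable def G (t : ℝ) (k : ℕ) : ℝ :=
  (336*t^2*((k:ℝ)+1)^2 + 8192*t^3*((k:ℝ)+1)^4 + 2*t) * E t (k+1)

lemma pairbound {t : ℝ} (ht : 0 < t) (k : ℕ) :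
    |((((2*k):ℕ):ℝ)+2) * D2 t (2*k+1) - ((((2*k+1):ℕ):ℝ)+2) * D2 t (2*k+1+1)| ≤ G t k := by
  have hK : (0:ℝ) ≤ (k:ℝ) := Nat.cast_nonneg k
  have hA := D3_nat ht (k := 2*k+1) (by omega)
  have hB := D2_nat ht (k := 2*k+2) (by omega)
  have hea := E_anti ht (show k+1 ≤ 2*k+1 by omega) (t := t)
  have heb := E_anti ht (show k+1 ≤ 2*k+2 by omega) (t := t)
  have hEp := E_pos (t := t) (k+1)
  have hEa := E_pos (t := t) (2*k+1)
  have hEb := E_pos (t := t) (2*k+2)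
  have hc1 : ((((2*k):ℕ):ℝ)+2) = 2*((k:ℝ)+1) := by push_cast; ring
  have hc2 : ((((2*k+1):ℕ):ℝ)+2) = 2*((k:ℝ)+1)+1 := by push_cast; ring
  have hc3 : (((2*k+1 : ℕ)):ℝ) = 2*(k:ℝ)+1 := by push_cast; ring
  have hidx : 2*k+1+1 = 2*k+2 := by omega
  rw [hc1, hc2, hidx]
  rw [hc3] at hA
  rw [show ((((2*k+2):ℕ)):ℝ) = 2*(k:ℝ)+2 by push_cast; ring] at hB
  rw [show 2*k+1+1 = 2*k+2 by omega] at hA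
  set K := (k:ℝ) + 1 with hKdef
  have hK1 : (1:ℝ) ≤ K := by rw [hKdef]; linarith
  -- rewrite the target difference
  have split : 2*K * D2 t (2*k+1) - (2*K+1) * D2 t (2*k+2)
      = 2*K * (D2 t (2*k+1) - D2 t (2*k+2)) - D2 t (2*k+2) - 2*K*D2 t (2*k+2) + 2*K*D2 t (2*k+2) := by
    ring
  have habs : |2*K * D2 t (2*k+1) - (2*K+1) * D2 t (2*k+2)|
      ≤ 2*K * |D2 t (2*k+2) - D2 t (2*k+1)| + |D2 t (2*k+2)| := by
    have h1 : 2*K * D2 t (2*k+1) - (2*K+1) * D2 t (2*k+2)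
        = -(2*K * (D2 t (2*k+2) - D2 t (2*k+1))) - D2 t (2*k+2) := by ring
    rw [h1]
    calc |(-(2*K * (D2 t (2*k+2) - D2 t (2*k+1)))) - D2 t (2*k+2)|
        ≤ |(-(2*K * (D2 t (2*k+2) - D2 t (2*k+1))))| + |D2 t (2*k+2)| := abs_sub _ _
      _ = 2*K * |D2 t (2*k+2) - D2 t (2*k+1)| + |D2 t (2*k+2)| := by
          rw [abs_neg, abs_mul, abs_of_nonneg (by linarith : (0:ℝ) ≤ 2*K)]
  apply le_trans habs
  -- now bound both pieces
  have step1 : 2*K * |D2 t (2*k+2) - D2 t (2*k+1)|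
      ≤ 2*K * ((48*t^2*(2*K) + 512*t^3*(2*K)^3) * E t (k+1)) := by
    apply mul_le_mul_of_nonneg_left _ (by linarith : (0:ℝ) ≤ 2*K)
    apply le_trans hA
    have h2 : 2*(k:ℝ)+1 ≤ 2*K := by rw [hKdef]; linarith
    have h3 : (0:ℝ) ≤ 2*(k:ℝ)+1 := by linarith
    gcongr <;> first | exact hea | nlinarith
  have step2 : |D2 t (2*k+2)| ≤ (36*t^2*(2*K)^2 + 2*t) * E t (k+1) := by
    apply le_trans hB
    have h2 : 2*(k:ℝ)+2 = 2*K := by rw [hKdef]; ring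
    rw [h2]
    gcongr <;> first | exact heb | nlinarith
  have final : 2*K * ((48*t^2*(2*K) + 512*t^3*(2*K)^3) * E t (k+1))
      + (36*t^2*(2*K)^2 + 2*t) * E t (k+1) = (336*t^2*K^2 + 8192*t^3*K^4 + 2*t) * E t (k+1) := by
    ring
  unfold G
  rw [← hKdef]
  linarith [step1, step2, final.le]

lemma summable_G {t : ℝ} (ht : 0 < t) : Summable (G t) := by
  unfold G
  have h2 := (summable_pow_E' ht 2).mul_left (336*t^2)
  have h4 := (summable_pow_E' ht 4).mul_left (8192*t^3)
  have h0 := ((summable_pow_E' ht 0).congr (fun n => by rw [pow_zero, one_mul])).mul_left (2*t)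
  apply ((h2.add h4).add h0).congr
  intro n; ring

lemma tsum_G_le {t : ℝ} (ht : 0 < t) : ∑' k, G t k ≤ 200000 * Real.sqrt t := by
  have h2 := (summable_pow_E' ht 2)
  have h4 := (summable_pow_E' ht 4)
  have h0 := ((summable_pow_E' ht 0).congr (fun n => by rw [pow_zero, one_mul]))
  have split : ∑' k, G t k = 336*t^2 * (∑' n : ℕ, ((n:ℝ)+1)^2 * E t (n+1))
      + 8192*t^3 * (∑' n : ℕ, ((n:ℝ)+1)^4 * E t (n+1))
      + 2*t * (∑' n : ℕ, E t (n+1)) := by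
    rw [← tsum_mul_left, ← tsum_mul_left, ← tsum_mul_left,
      ← Summable.tsum_add (h2.mul_left _) (h4.mul_left _),
      ← Summable.tsum_add ((h2.mul_left _).add (h4.mul_left _)) (h0.mul_left _)]
    apply tsum_congr
    intro n
    unfold G; ring
  rw [split]
  have hst : 0 < Real.sqrt t := Real.sqrt_pos.2 ht
  have hts : Real.sqrt t * Real.sqrt t = t := Real.mul_self_sqrt ht.le
  have b2 := tsum_sq_E_le' ht
  have b4 := tsum_four_E_le' ht
  have b0 := tsum_E_le' ht
  have c2 : 336*t^2 * (∑' n : ℕ, ((n:ℝ)+1)^2 * E t (n+1)) ≤ 336*t^2 * (3/(t*Real.sqrt t)) := by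
    apply mul_le_mul_of_nonneg_left b2 (by positivity)
  have c4 : 8192*t^3 * (∑' n : ℕ, ((n:ℝ)+1)^4 * E t (n+1)) ≤ 8192*t^3 * (24/(t^2*Real.sqrt t)) := by
    apply mul_le_mul_of_nonneg_left b4 (by positivity)
  have c0 : 2*t * (∑' n : ℕ, E t (n+1)) ≤ 2*t * (1/Real.sqrt t) := by
    apply mul_le_mul_of_nonneg_left b0 (by positivity)
  have e2 : 336*t^2 * (3/(t*Real.sqrt t)) = 1008 * Real.sqrt t := by
    field_simp
    nlinarith [hts]
  have e4 : 8192*t^3 * (24/(t^2*Real.sqrt t)) = 196608 * Real.sqrt t := by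
    field_simp
    nlinarith [hts, sq_nonneg t]
  have e0 : 2*t * (1/Real.sqrt t) = 2 * Real.sqrt t := by
    field_simp
    nlinarith [hts]
  rw [e2] at c2; rw [e4] at c4; rw [e0] at c0
  nlinarith

lemma Dt_bound {t : ℝ} (ht : 0 < t) :
    |4 * H t - (2*E t 1 - E t 2)| ≤ 200000 * Real.sqrt t := by
  set f : ℕ → ℝ := fun i => ((i:ℝ)+2) * D2 t (i+1) with hf
  have hfs : Summable f := summable_iD2 ht
  have hinj1 : Function.Injective (fun k : ℕ => 2*k) := fun a b h => by dsimp only at h; omega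
  have hinj2 : Function.Injective (fun k : ℕ => 2*k+1) := fun a b h => by dsimp only at h; omega
  have hseven : Summable (fun k : ℕ => f (2*k)) := hfs.comp_injective hinj1
  have hsodd : Summable (fun k : ℕ => f (2*k+1)) := hfs.comp_injective hinj2
  have heo := tsum_even_add_odd hseven hsodd
  have hteven : ∑' k : ℕ, f (2*k) = 2 * H t := by
    rw [← identityA ht, ← tsum_mul_left]
    apply tsum_congr
    intro k
    rw [hf]
    push_cast
    ring
  have hsum_f : ∑' i, f i = 2*E t 1 - E t 2 := identityB ht
  have htodd : ∑' k : ℕ, f (2*k+1) = (2*E t 1 - E t 2) - 2 * H t := by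
    rw [← hsum_f, ← heo, hteven]; ring
  have hDt : 4 * H t - (2*E t 1 - E t 2) = ∑' k : ℕ, (f (2*k) - f (2*k+1)) := by
    rw [Summable.tsum_sub hseven hsodd, hteven, htodd]; ring
  rw [hDt]
  have habs : |∑' k : ℕ, (f (2*k) - f (2*k+1))| ≤ ∑' k : ℕ, |f (2*k) - f (2*k+1)| := by
    have hs : Summable (fun k : ℕ => |f (2*k) - f (2*k+1)|) := by
      simpa [Real.norm_eq_abs] using (hseven.sub hsodd).norm
    simpa [Real.norm_eq_abs] using norm_tsum_le_tsum_norm (f := fun k : ℕ => f (2*k) - f (2*k+1)) hs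
  apply le_trans habs
  have hle : ∀ k : ℕ, |f (2*k) - f (2*k+1)| ≤ G t k := by
    intro k
    have := pairbound ht k
    simpa [hf] using this
  calc ∑' k : ℕ, |f (2*k) - f (2*k+1)| ≤ ∑' k, G t k := by
        apply Summable.tsum_le_tsum hle _ (summable_G ht)
        simpa [Real.norm_eq_abs] using (hseven.sub hsodd).norm
    _ ≤ 200000 * Real.sqrt t := tsum_G_le ht

lemma Hmain {t : ℝ} (ht : 0 < t) (ht1 : t ≤ 1) : |H t - 1/4| ≤ 50002 * Real.sqrt t := by
  have h1 := Dt_bound ht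
  have hst : 0 < Real.sqrt t := Real.sqrt_pos.2 ht
  have hts : Real.sqrt t * Real.sqrt t = t := Real.mul_self_sqrt ht.le
  have hst1 : Real.sqrt t ≤ 1 := by
    rw [show (1:ℝ) = Real.sqrt 1 by simp]
    exact Real.sqrt_le_sqrt ht1
  have htle : t ≤ Real.sqrt t := by nlinarith
  have hE1 : E t 1 = Real.exp (-t) := by unfold E; norm_num
  have hE2 : E t 2 = Real.exp (-(4*t)) := by unfold E; norm_num; ring_nf
  have a1 : 1 - t ≤ Real.exp (-t) := by linarith [Real.add_one_le_exp (-t)]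
  have a2 : Real.exp (-t) ≤ 1 := Real.exp_le_one_iff.2 (by linarith)
  have b1 : 1 - 4*t ≤ Real.exp (-(4*t)) := by linarith [Real.add_one_le_exp (-(4*t))]
  have b2 : Real.exp (-(4*t)) ≤ 1 := Real.exp_le_one_iff.2 (by linarith)
  have hmid : |2*E t 1 - E t 2 - 1| ≤ 6*t := by
    rw [hE1, hE2, abs_le]; constructor <;> nlinarith
  have : |4 * H t - 1| ≤ 200000 * Real.sqrt t + 6*t := by
    have := abs_sub_le (4 * H t) (2*E t 1 - E t 2) 1
    calc |4 * H t - 1| ≤ |4 * H t - (2*E t 1 - E t 2)| + |2*E t 1 - E t 2 - 1| := this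
      _ ≤ 200000 * Real.sqrt t + 6*t := by linarith
  have h4 : |4 * (H t - 1/4)| ≤ 200000 * Real.sqrt t + 6*t := by
    rw [show 4 * (H t - 1/4) = 4 * H t - 1 by ring]; exact this
  rw [abs_mul] at h4
  norm_num at h4
  nlinarith [abs_nonneg (H t - 1/4)]

noncomputable def F (s : ℝ) : ℝ := ∑' n : ℕ, (-1:ℝ)^n / ((n:ℝ)+1) * Real.exp (-s * ((n:ℝ)+1)^2)

lemma summable_F {s : ℝ} (hs : 0 < s) :
    Summable (fun n : ℕ => (-1:ℝ)^n / ((n:ℝ)+1) * Real.exp (-s * ((n:ℝ)+1)^2)) := by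
  apply Summable.of_norm
  apply Summable.of_nonneg_of_le (fun n => norm_nonneg _)
    (f := fun n : ℕ => ((n:ℝ)+1)^0 * Real.exp (-s * ((n:ℝ)+1)^2)) _ (summable_pow_E hs 0)
  intro n
  have hN : (0:ℝ) < (n:ℝ)+1 := by positivity
  have he : (0:ℝ) < Real.exp (-s * ((n:ℝ)+1)^2) := Real.exp_pos _
  simp only [pow_zero, one_mul]
  rw [Real.norm_eq_abs, abs_mul, abs_div, abs_pow, abs_neg, abs_one, one_pow,
    abs_of_pos hN, abs_of_pos he]
  rw [div_mul_eq_mul_div, one_mul, div_le_iff₀ hN]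
  nlinarith

lemma hasDerivAt_F {s : ℝ} (hs : 0 < s) : HasDerivAt F (-(H s)) s := by
  set a := s/2 with ha
  have ha0 : 0 < a := by positivity
  set g : ℕ → ℝ → ℝ := fun n y => (-1:ℝ)^n / ((n:ℝ)+1) * Real.exp (-y * ((n:ℝ)+1)^2) with hg
  set g' : ℕ → ℝ → ℝ := fun n y =>
    (-1:ℝ)^n / ((n:ℝ)+1) * (-((n:ℝ)+1)^2 * Real.exp (-y * ((n:ℝ)+1)^2)) with hg'
  set u : ℕ → ℝ := fun n => ((n:ℝ)+1) * Real.exp (-a * ((n:ℝ)+1)^2) with hu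
  have husum : Summable u := by
    apply (summable_pow_E ha0 1).congr
    intro n; rw [pow_one]
  have hgd : ∀ n y, y ∈ Ioi a → HasDerivAt (g n) (g' n y) y := by
    intro n y _
    have h1 : HasDerivAt (fun y : ℝ => -y * ((n:ℝ)+1)^2) (-((n:ℝ)+1)^2) y := by
      simpa using ((hasDerivAt_id y).neg.mul_const (((n:ℝ)+1)^2))
    have h2 := (h1.exp).const_mul ((-1:ℝ)^n / ((n:ℝ)+1))
    refine h2.congr_deriv ?_
    simp only [hg']
    ring
  have hbd : ∀ n y, y ∈ Ioi a → ‖g' n y‖ ≤ u n := by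
    intro n y hy
    have hN : (0:ℝ) < (n:ℝ)+1 := by positivity
    have he : (0:ℝ) < Real.exp (-y * ((n:ℝ)+1)^2) := Real.exp_pos _
    have hmono : Real.exp (-y * ((n:ℝ)+1)^2) ≤ Real.exp (-a * ((n:ℝ)+1)^2) := by
      apply Real.exp_le_exp.2
      have : a ≤ y := (le_of_lt hy)
      nlinarith
    rw [hg']
    rw [Real.norm_eq_abs, abs_mul, abs_div, abs_pow, abs_neg, abs_one, one_pow,
      abs_of_pos hN, abs_mul, abs_neg, abs_pow, abs_of_pos hN, abs_of_pos he]
    rw [hu]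
    rw [div_mul_eq_mul_div, one_mul, div_le_iff₀ hN]
    calc ((n:ℝ)+1)^2 * Real.exp (-y * ((n:ℝ)+1)^2)
        ≤ ((n:ℝ)+1)^2 * Real.exp (-a * ((n:ℝ)+1)^2) := by
          apply mul_le_mul_of_nonneg_left hmono (by positivity)
      _ = ((n:ℝ)+1) * Real.exp (-a * ((n:ℝ)+1)^2) * ((n:ℝ)+1) := by ring
  have hg0 : Summable (fun n => g n s) := summable_F hs
  have key := hasDerivAt_tsum_of_isPreconnected husum isOpen_Ioi (isPreconnected_Ioi)
    hgd hbd (show s ∈ Ioi a by rw [ha]; exact mem_Ioi.2 (by linarith)) hg0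
    (show s ∈ Ioi a by rw [ha]; exact mem_Ioi.2 (by linarith))
  have hval : ∑' n, g' n s = -(H s) := by
    unfold H
    rw [← tsum_neg]
    apply tsum_congr
    intro n
    rw [hg', E_succ]
    have hN : ((n:ℝ)+1) ≠ 0 := by positivity
    field_simp
  rw [hval] at key
  exact key

lemma slope_eq {y : ℝ} (hy : 0 < y) :
    ∃ c ∈ Ioo (y/2) (3*y/2), F (y/2) - F (3*y/2) = y * H c := by
  have hab : y/2 < 3*y/2 := by linarith
  have hcont : ContinuousOn F (Icc (y/2) (3*y/2)) := by
    intro x hx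
    have hx0 : 0 < x := lt_of_lt_of_le (by linarith : (0:ℝ) < y/2) hx.1
    exact (hasDerivAt_F hx0).continuousAt.continuousWithinAt
  have hderiv : ∀ x ∈ Ioo (y/2) (3*y/2), HasDerivAt F (-(H x)) x := by
    intro x hx
    exact hasDerivAt_F (lt_trans (by linarith) hx.1)
  obtain ⟨c, hc, hceq⟩ := exists_hasDerivAt_eq_slope F (fun x => -(H x)) hab hcont hderiv
  refine ⟨c, hc, ?_⟩
  have h1 : 3*y/2 - y/2 = y := by ring
  rw [h1] at hceq
  have hy' : y ≠ 0 := hy.ne'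
  field_simp at hceq
  linarith [hceq]

noncomputable def gBody (y : ℝ) : ℝ :=
  ∑' n : ℕ, (-1 : ℝ) ^ n * Real.exp (-((n : ℝ) + 1) ^ 2 * y / 2) *
    (1 - Real.exp (-((n : ℝ) + 1) ^ 2 * y)) / ((n : ℝ) + 1)

lemma g_eq {y : ℝ} (hy : 0 < y) : gBody y = F (y/2) - F (3*y/2) := by
  unfold gBody F
  rw [← Summable.tsum_sub (summable_F (by linarith : (0:ℝ) < y/2))
    (summable_F (by linarith : (0:ℝ) < 3*y/2))]
  apply tsum_congr
  intro n
  have e1 : Real.exp (-((n:ℝ)+1)^2*y/2) = Real.exp (-(y/2)*((n:ℝ)+1)^2) := by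
    congr 1; ring
  have e2 : Real.exp (-((n:ℝ)+1)^2*y/2) * Real.exp (-((n:ℝ)+1)^2*y)
      = Real.exp (-(3*y/2)*((n:ℝ)+1)^2) := by
    rw [← Real.exp_add]; congr 1; ring
  calc (-1:ℝ)^n * Real.exp (-((n:ℝ)+1)^2*y/2) * (1 - Real.exp (-((n:ℝ)+1)^2*y)) / ((n:ℝ)+1)
      = (-1:ℝ)^n/((n:ℝ)+1) * Real.exp (-((n:ℝ)+1)^2*y/2)
        - (-1:ℝ)^n/((n:ℝ)+1) * (Real.exp (-((n:ℝ)+1)^2*y/2) * Real.exp (-((n:ℝ)+1)^2*y)) := by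
        ring
    _ = (-1:ℝ)^n/((n:ℝ)+1) * Real.exp (-(y/2)*((n:ℝ)+1)^2)
        - (-1:ℝ)^n/((n:ℝ)+1) * Real.exp (-(3*y/2)*((n:ℝ)+1)^2) := by
        rw [e2, e1]

/-- For `g(y) = Σ_{n≥1} (−1)^{n+1} e^{−n²y/2}(1 − e^{−n²y})/n`, one has
`lim_{y→0⁺} g(y)/y = 1/4`. -/
theorem g_div_y_tendsto :
    Filter.Tendsto
      (fun y : ℝ =>
        (∑' n : ℕ, (-1 : ℝ) ^ n * Real.exp (-((n : ℝ) + 1) ^ 2 * y / 2) *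
          (1 - Real.exp (-((n : ℝ) + 1) ^ 2 * y)) / ((n : ℝ) + 1)) / y)
      (nhdsWithin 0 (Set.Ioi 0)) (nhds (1 / 4)) := by
  have key : ∀ y ∈ Ioc (0:ℝ) (1/2), |gBody y / y - 1/4| ≤ 50002 * Real.sqrt (3*y/2) := by
    intro y hy
    obtain ⟨hy0, hy2⟩ := hy
    obtain ⟨c, hc, hceq⟩ := slope_eq hy0
    have hgy : gBody y = y * H c := by rw [g_eq hy0]; exact hceq
    have hdiv : gBody y / y = H c := by rw [hgy]; field_simp
    rw [hdiv]
    have hc0 : 0 < c := lt_trans (by linarith) hc.1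
    have hc1 : c ≤ 1 := by have := hc.2; linarith
    have := Hmain hc0 hc1
    have hsq : Real.sqrt c ≤ Real.sqrt (3*y/2) := Real.sqrt_le_sqrt (le_of_lt hc.2)
    calc |H c - 1/4| ≤ 50002 * Real.sqrt c := this
      _ ≤ 50002 * Real.sqrt (3*y/2) := by linarith
  have hB : Filter.Tendsto (fun y : ℝ => 50002 * Real.sqrt (3*y/2))
      (nhdsWithin 0 (Set.Ioi 0)) (𝓝 0) := by
    have hcont : Continuous fun y : ℝ => 50002 * Real.sqrt (3*y/2) := by
      apply Continuous.mul continuous_const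
      apply Real.continuous_sqrt.comp
      continuity
    have h0 := hcont.tendsto 0
    rw [show (3*(0:ℝ)/2) = 0 by norm_num, Real.sqrt_zero, mul_zero] at h0
    exact h0.mono_left nhdsWithin_le_nhds
  have hev : ∀ᶠ y in nhdsWithin (0:ℝ) (Set.Ioi 0),
      ‖gBody y / y - 1/4‖ ≤ 50002 * Real.sqrt (3*y/2) := by
    filter_upwards [Ioc_mem_nhdsGT (show (0:ℝ) < 1/2 by norm_num)] with y hy
    simpa [Real.norm_eq_abs] using key y hy
  have hsq := squeeze_zero_norm' hev hB
  have := tendsto_sub_nhds_zero_iff.mp hsq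
  exact this
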